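/- Let (S, ⊑) be a cpo, let H be a nonzero finite-dimensional complex Hilbert space, let (Pᵢ, fᵢ)_{i≥1} be a monotone S-labeled sequence of partitions of H, and let P∞ be the eventual supremum of (Pᵢ). Fix p∞ ∈ P∞. Then: (a) for every sequence of cells p₁, p₂, … with pᵢ ∈ Pᵢ, pᵢ not orthogonal to p_{i+1} for all i, and pᵢ not orthogonal to p∞ for all i, the sequence f₁(p₁) ⊑ f₂(p₂) ⊑ ⋯ is monotone increasing and hence has a supremum in S; and (b) for any two such sequences (pᵢ) and (p′ᵢ), one has sup_{i} fᵢ(pᵢ) = sup_{i} fᵢ(p′ᵢ). -/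
import Mathlib


variable {H : Type*} [NormedAddCommGroup H] [InnerProductSpace ℂ H]

/-- Two subspaces of a complex inner product space are orthogonal when every vector of
one is orthogonal to every vector of the other. -/
def Orth (p q : Submodule ℂ H) : Prop :=
  ∀ x ∈ p, ∀ y ∈ q, @inner ℂ H _ x y = 0

/-- A partition of `H` is a set of nonzero closed subspaces of `H` that are pairwise
orthogonal and whose supremum in the complete lattice of closed subspaces of `H`
(i.e. the topological closure of the submodule supremum) is all of `H`. -/
def IsPartition (P : Set (Submodule ℂ H)) : Prop :=
  (∀ p ∈ P, p ≠ ⊥) ∧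
  (∀ p ∈ P, IsClosed (p : Set H)) ∧
  (∀ p ∈ P, ∀ q ∈ P, p ≠ q → Orth p q) ∧
  (sSup P).topologicalClosure = ⊤

/-- `P₁` refines `P₂` when every cell of `P₁` is contained in some cell of `P₂`. -/
def Refines (P₁ P₂ : Set (Submodule ℂ H)) : Prop :=
  ∀ p ∈ P₁, ∃ q ∈ P₂, p ≤ q

/-- A multicell of a partition `P` is the supremum (in the lattice of closed subspaces)
of a possibly empty subset of `P`. -/
def IsMulticell (P : Set (Submodule ℂ H)) (m : Submodule ℂ H) : Prop :=
  ∃ C ⊆ P, m = (sSup C).topologicalClosure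

variable {S : Type*} [PartialOrder S]

/-- A monotone `S`-labeled sequence of partitions of `H`: a sequence `P i` of partitions
together with labelings `f i` of their cells such that for `i ≤ j` and non-orthogonal cells
`p ∈ P i`, `q ∈ P j` one has `f i p ⊑ f j q`. -/
def MonotoneLabeled (P : ℕ → Set (Submodule ℂ H)) (f : ℕ → Submodule ℂ H → S) : Prop :=
  ∀ i j : ℕ, i ≤ j → ∀ p ∈ P i, ∀ q ∈ P j, ¬ Orth p q → f i p ≤ f j q

/-- A partition `Pinf` is the eventual supremum of the sequence `P` if, for all sufficiently
large `n`, `Pinf` is the least upper bound of `{P i : i ≥ n}` in the refinement order. -/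
def IsEventualSup (P : ℕ → Set (Submodule ℂ H)) (Pinf : Set (Submodule ℂ H)) : Prop :=
  ∃ N : ℕ, ∀ n, N ≤ n →
    (∀ i, n ≤ i → Refines (P i) Pinf) ∧
      ∀ Q : Set (Submodule ℂ H), IsPartition Q →
        (∀ i, n ≤ i → Refines (P i) Q) → Refines Pinf Q

lemma orth_iff {p q : Submodule ℂ H} : Orth p q ↔ q ≤ pᗮ := by
  constructor
  · intro h y hy
    exact (Submodule.mem_orthogonal p y).mpr fun u hu => h u hu y hy
  · intro h x hx y hy
    exact (Submodule.mem_orthogonal p y).mp (h hy) x hx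

lemma orth_symm {p q : Submodule ℂ H} (h : Orth p q) : Orth q p := by
  intro x hx y hy
  rw [← inner_conj_symm, h y hy x hx, map_zero]

lemma tc_eq [FiniteDimensional ℂ H] (K : Submodule ℂ H) :
    K.topologicalClosure = K :=
  (Submodule.closed_of_finiteDimensional K).submodule_topologicalClosure_eq

lemma cells_span [FiniteDimensional ℂ H]
    {Pa Pinf : Set (Submodule ℂ H)} (hPa : IsPartition Pa) (hPinf : IsPartition Pinf)
    (href : Refines Pa Pinf) {pinf : Submodule ℂ H} (hpinf : pinf ∈ Pinf) :
    sSup {r | r ∈ Pa ∧ r ≤ pinf} = pinf := by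
  set m := sSup {r | r ∈ Pa ∧ r ≤ pinf} with hm
  have hmle : m ≤ pinf := sSup_le fun r hr => hr.2
  have htop : sSup Pa = ⊤ := by
    have h := hPa.2.2.2
    rwa [tc_eq] at h
  have hle : (⊤ : Submodule ℂ H) ≤ m ⊔ pinfᗮ := by
    rw [← htop]
    refine sSup_le fun r hr => ?_
    obtain ⟨q, hq, hrq⟩ := href r hr
    by_cases hqe : q = pinf
    · exact le_sup_of_le_left (le_sSup ⟨hr, hqe ▸ hrq⟩)
    · have ho : Orth pinf q := orth_symm (hPinf.2.2.1 q hq pinf hpinf hqe)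
      exact le_sup_of_le_right (le_trans hrq (orth_iff.mp ho))
  have hassoc : (m ⊔ pinfᗮ) ⊓ pinf = m ⊔ pinfᗮ ⊓ pinf := sup_inf_assoc_of_le pinfᗮ hmle
  have h2 : pinf ≤ m ⊔ pinfᗮ ⊓ pinf := by
    rw [← hassoc]
    exact le_inf (le_trans le_top hle) le_rfl
  rw [inf_comm, Submodule.inf_orthogonal_eq_bot, sup_bot_eq] at h2
  exact le_antisymm hmle h2

lemma orth_mono {p q p' q' : Submodule ℂ H} (h : Orth p q) (hp : p' ≤ p) (hq : q' ≤ q) :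
    Orth p' q' := fun x hx y hy => h x (hp hx) y (hq hy)

lemma orth_self {p : Submodule ℂ H} (h : Orth p p) : p = ⊥ := by
  rw [Submodule.eq_bot_iff]
  intro x hx
  exact inner_self_eq_zero.mp (h x hx x hx)

lemma orth_sSup {p : Submodule ℂ H} {T : Set (Submodule ℂ H)}
    (h : ∀ t ∈ T, Orth p t) : Orth p (sSup T) :=
  orth_iff.mpr (sSup_le fun t ht => orth_iff.mp (h t ht))

/-- `ReachTail P p' a r` : there is a chain of cells with nondecreasing levels, starting
at `r` at level `a`, consecutive cells non-orthogonal, ending at some `p' j`. -/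
inductive ReachTail (P : ℕ → Set (Submodule ℂ H)) (p' : ℕ → Submodule ℂ H) :
    ℕ → Submodule ℂ H → Prop
  | base (j : ℕ) : ReachTail P p' j (p' j)
  | step {a b : ℕ} {r t : Submodule ℂ H} (hab : a ≤ b) (ht : t ∈ P b)
      (hno : ¬ Orth r t) (h : ReachTail P p' b t) : ReachTail P p' a r

lemma key [FiniteDimensional ℂ H]
    (P : ℕ → Set (Submodule ℂ H)) (hP : ∀ i, IsPartition (P i))
    (f : ℕ → Submodule ℂ H → S) (hf : MonotoneLabeled P f)
    (Pinf : Set (Submodule ℂ H)) (hPinf : IsPartition Pinf)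
    (hev : IsEventualSup P Pinf)
    (pinf : Submodule ℂ H) (hpinf : pinf ∈ Pinf)
    (p p' : ℕ → Submodule ℂ H)
    (hp : ∀ i, p i ∈ P i) (hpc : ∀ i, ¬ Orth (p i) (p (i + 1))) (hpo : ∀ i, ¬ Orth (p i) pinf)
    (hp' : ∀ i, p' i ∈ P i) (hpo' : ∀ i, ¬ Orth (p' i) pinf)
    (s' : S) (hs' : s' ∈ upperBounds (Set.range fun i => f i (p' i))) :
    ∀ i, f i (p i) ≤ s' := by
  classical
  obtain ⟨N, hN⟩ := hev
  -- monotonicity along the sequence p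
  have hmono : Monotone fun i => f i (p i) :=
    monotone_nat_of_le_succ fun n =>
      hf n (n + 1) (Nat.le_succ n) _ (hp n) _ (hp (n + 1)) (hpc n)
  -- every cell at level ≥ N not orthogonal to pinf is contained in pinf
  have hsub : ∀ i, N ≤ i → ∀ r ∈ P i, ¬ Orth r pinf → r ≤ pinf := by
    intro i hi r hr hro
    obtain ⟨q, hq, hrq⟩ := (hN N le_rfl).1 i hi r hr
    by_cases hqe : q = pinf
    · exact hqe ▸ hrq
    · exact absurd (orth_mono (hPinf.2.2.1 q hq pinf hpinf hqe) hrq le_rfl) hro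
  -- the span of "good" cells (those reaching the tail of p') at levels ≥ n
  set E : ℕ → Submodule ℂ H := fun n =>
    sSup {r | ∃ a, n ≤ a ∧ r ∈ P a ∧ r ≤ pinf ∧ ReachTail P p' a r} with hE
  have hEanti : ∀ n m, n ≤ m → E m ≤ E n := by
    intro n m hnm
    refine sSup_le fun r hr => ?_
    obtain ⟨a, ham, h1, h2, h3⟩ := hr
    exact le_sSup ⟨a, le_trans hnm ham, h1, h2, h3⟩
  -- stabilization of E
  obtain ⟨n₀, hn₀⟩ : ∃ n₀, ∀ m, Module.finrank ℂ (E n₀) ≤ Module.finrank ℂ (E m) := by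
    have hne : (Set.range fun n => Module.finrank ℂ (E n)).Nonempty := ⟨_, ⟨0, rfl⟩⟩
    obtain ⟨n₀, hn₀⟩ := Nat.sInf_mem hne
    have hn₀' : Module.finrank ℂ (E n₀) = sInf (Set.range fun n => Module.finrank ℂ (E n)) := hn₀
    refine ⟨n₀, fun m => ?_⟩
    rw [hn₀']
    exact Nat.sInf_le ⟨m, rfl⟩
  have hstab : ∀ m, n₀ ≤ m → E m = E n₀ :=
    fun m hm => Submodule.eq_of_le_of_finrank_le (hEanti n₀ m hm) (hn₀ m)
  set n₁ := max n₀ N with hn₁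
  have hn₁N : N ≤ n₁ := le_max_right _ _
  have hstab₁ : ∀ a, n₁ ≤ a → E a = E n₁ := by
    intro a ha
    rw [hstab a (le_trans (le_max_left _ _) ha), hstab n₁ (le_max_left _ _)]
  -- a cell not orthogonal to E at its own level is good
  have hlift : ∀ a, n₁ ≤ a → ∀ r : Submodule ℂ H, ¬ Orth r (E a) → ReachTail P p' a r := by
    intro a ha r hro
    by_contra hg
    apply hro
    apply orth_sSup
    rintro t ⟨c, hac, htm, htp, htg⟩
    by_contra hno
    exact hg (ReachTail.step hac htm hno htg)
  -- bad cells are orthogonal to E n₁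
  have hbad : ∀ a, n₁ ≤ a → ∀ r ∈ P a, r ≤ pinf → ¬ ReachTail P p' a r →
      Orth r (E n₁) := by
    intro a ha r hrm hrp hrg
    rw [← hstab₁ a ha]
    by_contra hro
    exact hrg (hlift a ha r hro)
  -- the span of bad cells
  set D : Submodule ℂ H :=
    sSup {r | ∃ a, n₁ ≤ a ∧ r ∈ P a ∧ r ≤ pinf ∧ ¬ ReachTail P p' a r} with hD
  have hED : Orth (E n₁) D := by
    apply orth_sSup
    rintro r ⟨a, ha, h1, h2, h3⟩
    exact orth_symm (hbad a ha r h1 h2 h3)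
  have hDE : Orth D (E n₁) := orth_symm hED
  have hEle : E n₁ ≤ pinf := by
    refine sSup_le fun r hr => ?_
    obtain ⟨a, _, _, h2, _⟩ := hr
    exact h2
  have hDle : D ≤ pinf := by
    refine sSup_le fun r hr => ?_
    obtain ⟨a, _, _, h2, _⟩ := hr
    exact h2
  have hp'le : ∀ j, N ≤ j → p' j ≤ pinf := fun j hj => hsub j hj _ (hp' j) (hpo' j)
  have hEmem : p' n₁ ≤ E n₁ :=
    le_sSup ⟨n₁, le_rfl, hp' n₁, hp'le n₁ hn₁N, ReachTail.base n₁⟩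
  have hEne : E n₁ ≠ ⊥ := by
    intro h
    exact (hP n₁).1 _ (hp' n₁) (le_bot_iff.mp (h ▸ hEmem))
  -- D ⊔ E n₁ = pinf
  have hcells : sSup {r | r ∈ P n₁ ∧ r ≤ pinf} = pinf :=
    cells_span (hP n₁) hPinf ((hN N le_rfl).1 n₁ hn₁N) hpinf
  have hsupDE : D ⊔ E n₁ = pinf := by
    refine le_antisymm (sup_le hDle hEle) ?_
    rw [← hcells]
    refine sSup_le fun r hr => ?_
    by_cases hg : ReachTail P p' n₁ r
    · exact le_sup_of_le_right (le_sSup ⟨n₁, le_rfl, hr.1, hr.2, hg⟩)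
    · exact le_sup_of_le_left (le_sSup ⟨n₁, le_rfl, hr.1, hr.2, hg⟩)
  -- D = ⊥, via the leastness of Pinf
  have hDbot : D = ⊥ := by
    by_contra hDne
    set Q : Set (Submodule ℂ H) := (Pinf \ {pinf}) ∪ {D, E n₁} with hQ
    have hQpart : IsPartition Q := by
      refine ⟨?_, ?_, ?_, ?_⟩
      · rintro q (⟨hq, -⟩ | hq)
        · exact hPinf.1 q hq
        · rcases hq with rfl | hq
          · exact hDne
          · rw [Set.mem_singleton_iff] at hq
            exact hq ▸ hEne
      · exact fun q _ => Submodule.closed_of_finiteDimensional q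
      · have horthP : ∀ u ∈ Pinf \ {pinf}, ∀ v, v ≤ pinf → Orth u v := by
          rintro u ⟨hu, hune⟩ v hv
          exact orth_mono (hPinf.2.2.1 u hu pinf hpinf hune) le_rfl hv
        have hmemle : ∀ v ∈ ({D, E n₁} : Set (Submodule ℂ H)), v ≤ pinf := by
          rintro v (rfl | hv)
          · exact hDle
          · rw [Set.mem_singleton_iff] at hv
            exact hv ▸ hEle
        rintro u (hu | hu) v (hv | hv) huv
        · exact hPinf.2.2.1 u hu.1 v hv.1 huv
        · exact horthP u hu v (hmemle v hv)
        · exact orth_symm (horthP v hv u (hmemle u hu))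
        · rcases hu with rfl | hu <;> rcases hv with rfl | hv
          · exact absurd rfl huv
          · rw [Set.mem_singleton_iff] at hv
            exact hv ▸ hDE
          · rw [Set.mem_singleton_iff] at hu
            exact hu ▸ hED
          · rw [Set.mem_singleton_iff] at hu hv
            exact absurd (hu.trans hv.symm) huv
      · have hset : Pinf \ {pinf} ∪ {pinf} = Pinf :=
          Set.diff_union_of_subset (Set.singleton_subset_iff.mpr hpinf)
        have htopP : sSup Pinf = ⊤ := by
          have h := hPinf.2.2.2
          rwa [tc_eq] at h
        have hQtop : sSup Q = ⊤ := by
          rw [hQ, sSup_union, sSup_pair, hsupDE, ← htopP]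
          conv_rhs => rw [← hset]
          rw [sSup_union, sSup_singleton]
        rw [hQtop, tc_eq]
    have hQref : ∀ i, n₁ ≤ i → Refines (P i) Q := by
      intro i hi r hr
      obtain ⟨q, hq, hrq⟩ := (hN N le_rfl).1 i (le_trans hn₁N hi) r hr
      by_cases hqe : q = pinf
      · subst hqe
        by_cases hg : ReachTail P p' i r
        · exact ⟨E n₁, Or.inr (Or.inr rfl), le_sSup ⟨i, hi, hr, hrq, hg⟩⟩
        · exact ⟨D, Or.inr (Or.inl rfl), le_sSup ⟨i, hi, hr, hrq, hg⟩⟩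
      · exact ⟨q, Or.inl ⟨hq, hqe⟩, hrq⟩
    obtain ⟨q, hq, hle⟩ := (hN n₁ hn₁N).2 Q hQpart hQref pinf hpinf
    rcases hq with ⟨hq, hqne⟩ | hq
    · have : Orth pinf pinf :=
        orth_mono (hPinf.2.2.1 q hq pinf hpinf hqne) hle le_rfl
      exact hPinf.1 pinf hpinf (orth_self this)
    · rcases hq with rfl | hq
      · have : Orth (E n₁) (E n₁) := orth_mono hED le_rfl (hEle.trans hle)
        exact hEne (orth_self this)
      · rw [Set.mem_singleton_iff] at hq
        subst hq
        have : Orth D D := orth_mono hDE le_rfl (hDle.trans hle)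
        exact hDne (orth_self this)
  -- hence every p i at level ≥ n₁ is good
  have hgood : ∀ i, n₁ ≤ i → ReachTail P p' i (p i) := by
    intro i hi
    by_contra hg
    have : p i ≤ D := le_sSup ⟨i, hi, hp i, hsub i (le_trans hn₁N hi) _ (hp i) (hpo i), hg⟩
    rw [hDbot, le_bot_iff] at this
    exact (hP i).1 _ (hp i) this
  -- labels of good cells are below s'
  have hgoodle : ∀ a (r : Submodule ℂ H), ReachTail P p' a r → r ∈ P a → f a r ≤ s' := by
    intro a r hg
    induction hg with
    | base j => exact fun _ => hs' ⟨j, rfl⟩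
    | step hab ht hno h ih =>
      exact fun hr => le_trans (hf _ _ hab _ hr _ ht hno) (ih ht)
  intro i
  calc f i (p i) ≤ f (max i n₁) (p (max i n₁)) := hmono (le_max_left _ _)
    _ ≤ s' := hgoodle _ _ (hgood _ (le_max_right _ _)) (hp _)

/-- Let `S` be a cpo, `H` a nonzero finite-dimensional complex Hilbert
space, `(P i, f i)` a monotone `S`-labeled sequence of partitions of `H`, `Pinf` the eventual
supremum of `(P i)`, and `pinf ∈ Pinf`.  (a) For every sequence of cells `p i ∈ P i` with
consecutive cells not orthogonal and each `p i` not orthogonal to `pinf`, the sequence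
`f i (p i)` is monotone increasing and has a supremum in `S`.  (b) Any two such sequences
have the same supremum. -/
theorem label_sup_well_defined
    (hcpo : ∀ g : ℕ → S, Monotone g → ∃ s, IsLUB (Set.range g) s)
    [FiniteDimensional ℂ H] [Nontrivial H]
    (P : ℕ → Set (Submodule ℂ H)) (hP : ∀ i, IsPartition (P i))
    (f : ℕ → Submodule ℂ H → S) (hf : MonotoneLabeled P f)
    (Pinf : Set (Submodule ℂ H)) (hPinf : IsPartition Pinf)
    (hev : IsEventualSup P Pinf)
    (pinf : Submodule ℂ H) (hpinf : pinf ∈ Pinf) :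
    (∀ p : ℕ → Submodule ℂ H, (∀ i, p i ∈ P i) →
        (∀ i, ¬ Orth (p i) (p (i + 1))) → (∀ i, ¬ Orth (p i) pinf) →
        Monotone (fun i => f i (p i)) ∧ ∃ s, IsLUB (Set.range fun i => f i (p i)) s) ∧
      ∀ p p' : ℕ → Submodule ℂ H,
        (∀ i, p i ∈ P i) → (∀ i, ¬ Orth (p i) (p (i + 1))) → (∀ i, ¬ Orth (p i) pinf) →
        (∀ i, p' i ∈ P i) → (∀ i, ¬ Orth (p' i) (p' (i + 1))) → (∀ i, ¬ Orth (p' i) pinf) →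
        ∀ s s' : S, IsLUB (Set.range fun i => f i (p i)) s →
          IsLUB (Set.range fun i => f i (p' i)) s' → s = s' := by
  have parta : ∀ p : ℕ → Submodule ℂ H, (∀ i, p i ∈ P i) →
      (∀ i, ¬ Orth (p i) (p (i + 1))) → (∀ i, ¬ Orth (p i) pinf) →
      Monotone (fun i => f i (p i)) ∧ ∃ s, IsLUB (Set.range fun i => f i (p i)) s := by
    intro p hp hpc _
    have hmono : Monotone fun i => f i (p i) :=
      monotone_nat_of_le_succ fun n =>
        hf n (n + 1) (Nat.le_succ n) _ (hp n) _ (hp (n + 1)) (hpc n)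
    exact ⟨hmono, hcpo _ hmono⟩
  refine ⟨parta, ?_⟩
  intro p p' hp hpc hpo hp' hpc' hpo' s s' hs hs'
  have h1 : ∀ i, f i (p i) ≤ s' :=
    key P hP f hf Pinf hPinf hev pinf hpinf p p' hp hpc hpo hp' hpo' s' hs'.1
  have h2 : ∀ i, f i (p' i) ≤ s :=
    key P hP f hf Pinf hPinf hev pinf hpinf p' p hp' hpc' hpo' hp hpo s hs.1
  refine le_antisymm (hs.2 ?_) (hs'.2 ?_)
  · rintro y ⟨i, rfl⟩
    exact h1 i
  · rintro y ⟨i, rfl⟩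
    exact h2 i
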